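/- arXiv:2308.14926 — 4 statements merged into one kernel-verified Lean document; each statement's English description precedes it below -/
import Mathlib

section
/- Let V=(d,Q,Δ) be a VASS, ρ a path of length k, s_0(v_0)∈Q×ℕ^d, and m=mi(ρ,s_0,v_0). If the monus run induced by ρ from s_0(v_0) is s_0(v_0),…,s_{k-1}(v_{k-1}),s_k(v_k), then the classical run induced by ρ from s_0(v_0−m) exists and has the form s_0(v'_0),…,s_{k-1}(v'_{k-1}),s_k(v'_k) with v'_0=v_0−m and v'_k=v_k. -/
/-- A transition of a `d`-dimensional VASS over state set `Q`:
a source state, an update vector in `ℤ^d`, and a target state. -/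
abbrev VTrans (d : ℕ) (Q : Type*) := Q × (Fin d → ℤ) × Q

/-- A vector addition system with states (VASS), given by its set of transitions. -/
structure VASS (d : ℕ) (Q : Type*) where
  Δ : Set (VTrans d Q)

variable {d : ℕ} {Q : Type*}

/-- A sequence of transitions is a path if consecutive states match. -/
def IsPath (ρ : List (VTrans d Q)) : Prop := ρ.Chain' (fun t t' => t.2.2 = t'.1)

/-- A path of the VASS `V`. -/
def PathIn (V : VASS d Q) (ρ : List (VTrans d Q)) : Prop :=
  IsPath ρ ∧ ∀ t ∈ ρ, t ∈ V.Δ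

/-- The path starts at state `s` (any state works for the empty path). -/
def FromState (s : Q) (ρ : List (VTrans d Q)) : Prop :=
  match ρ with
  | [] => True
  | t :: _ => t.1 = s

/-- The last state of the run induced by `ρ` from state `s`. -/
def endState (s : Q) (ρ : List (VTrans d Q)) : Q := (ρ.map (fun t => t.2.2)).getLastD s

/-- Cast a vector over `ℕ` to a vector over `ℤ`. -/
def ofNatVec (v : Fin d → ℕ) : Fin d → ℤ := fun j => (v j : ℤ)

/-- The `i`-th vector of the ℤ-run induced by the path `ρ` from initial vector `v`. -/
def zrun (v : Fin d → ℤ) (ρ : List (VTrans d Q)) (i : ℕ) : Fin d → ℤ :=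
  v + ((ρ.take i).map (fun t => t.2.1)).sum

/-- The last vector of the ℤ-run induced by `ρ` from `v`. -/
def zend (v : Fin d → ℤ) (ρ : List (VTrans d Q)) : Fin d → ℤ := zrun v ρ ρ.length

/-- One step of the monus semantics: add `z` and truncate at `0` componentwise. -/
def mstep (v : Fin d → ℕ) (z : Fin d → ℤ) : Fin d → ℕ := fun j => ((v j : ℤ) + z j).toNat

/-- The `i`-th vector of the monus run induced by the path `ρ` from initial vector `v`. -/
def mrun (v : Fin d → ℕ) (ρ : List (VTrans d Q)) (i : ℕ) : Fin d → ℕ :=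
  (ρ.take i).foldl (fun u t => mstep u t.2.1) v

/-- The last vector of the monus run induced by `ρ` from `v`. -/
def mend (v : Fin d → ℕ) (ρ : List (VTrans d Q)) : Fin d → ℕ := mrun v ρ ρ.length

/-- The classical run induced by `ρ` from `v` exists: no value of the ℤ-run
drops below zero in any coordinate. -/
def ClassicalOK (v : Fin d → ℕ) (ρ : List (VTrans d Q)) : Prop :=
  ∀ i ≤ ρ.length, ∀ j, 0 ≤ zrun (ofNatVec v) ρ i j

/-- Classical reachability `s(v) →* t(w)`. -/
def ClassicalReach (V : VASS d Q) (s : Q) (v : Fin d → ℕ) (t : Q) (w : Fin d → ℕ) : Prop :=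
  ∃ ρ, PathIn V ρ ∧ FromState s ρ ∧ endState s ρ = t ∧ ClassicalOK v ρ ∧
    zend (ofNatVec v) ρ = ofNatVec w

/-- Reachability in ℤ-semantics `s(v) →ℤ* t(w)`. -/
def ZReach (V : VASS d Q) (s : Q) (v : Fin d → ℤ) (t : Q) (w : Fin d → ℤ) : Prop :=
  ∃ ρ, PathIn V ρ ∧ FromState s ρ ∧ endState s ρ = t ∧ zend v ρ = w

/-- Reachability in monus semantics `s(v) ⇝* t(w)`. -/
def MonusReach (V : VASS d Q) (s : Q) (v : Fin d → ℕ) (t : Q) (w : Fin d → ℕ) : Prop :=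
  ∃ ρ, PathIn V ρ ∧ FromState s ρ ∧ endState s ρ = t ∧ mend v ρ = w

/-- Coordinate `j` hits `0` in the ℤ-run (equivalently, classical run) induced
by `ρ` from `v` (at some index `1 ≤ i ≤ k`). -/
def HitsZeroZ (v : Fin d → ℤ) (ρ : List (VTrans d Q)) (j : Fin d) : Prop :=
  ∃ i, 1 ≤ i ∧ i ≤ ρ.length ∧ zrun v ρ i j = 0

/-- Coordinate `j` hits `0` in the monus run induced by `ρ` from `v`. -/
def HitsZeroM (v : Fin d → ℕ) (ρ : List (VTrans d Q)) (j : Fin d) : Prop :=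
  ∃ i, 1 ≤ i ∧ i ≤ ρ.length ∧ mrun v ρ i j = 0

/-- The monus run induced by `ρ` from `v` is lossy: at some step, for some
coordinate, the actual change differs from the transition's update. -/
def Lossy (v : Fin d → ℕ) (ρ : List (VTrans d Q)) : Prop :=
  ∃ (i : Fin ρ.length) (j : Fin d),
    (mrun v ρ ((i : ℕ) + 1) j : ℤ) ≠ (mrun v ρ (i : ℕ) j : ℤ) + (ρ.get i).2.1 j

/-- `mi ρ s₀ v₀`: the coordinatewise minimum (with `0`) of all values along
the ℤ-run induced by `ρ` from `v`. -/
def mi (v : Fin d → ℤ) (ρ : List (VTrans d Q)) : Fin d → ℤ :=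
  fun j => min 0 ((Finset.range (ρ.length + 1)).inf' Finset.nonempty_range_add_one
    (fun i => zrun v ρ i j))

/-- The reverse VASS: `(p,z,q)` is a transition iff `(q,-z,p)` is one of `V`. -/
def revV (V : VASS d Q) : VASS d Q := ⟨{tr | (tr.2.2, -tr.2.1, tr.1) ∈ V.Δ}⟩

/-- Coverability in monus semantics. -/
def MonusCover (V : VASS d Q) (s : Q) (v : Fin d → ℕ) (t : Q) (w : Fin d → ℕ) : Prop :=
  ∃ w', w ≤ w' ∧ MonusReach V s v t w'

/-- Coverability in classical semantics. -/
def ClassicalCover (V : VASS d Q) (s : Q) (v : Fin d → ℕ) (t : Q) (w : Fin d → ℕ) : Prop :=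
  ∃ w', w ≤ w' ∧ ClassicalReach V s v t w'

lemma take_succ_eq' {ρ : List (VTrans d Q)} {i : ℕ} (h : i < ρ.length) :
    ρ.take (i+1) = ρ.take i ++ [ρ.get ⟨i, h⟩] := by
  rw [List.take_succ]
  simp [List.getElem?_eq_getElem h]

lemma zrun_succ (v : Fin d → ℤ) {ρ : List (VTrans d Q)} {i : ℕ} (h : i < ρ.length) (j : Fin d) :
    zrun v ρ (i+1) j = zrun v ρ i j + (ρ.get ⟨i, h⟩).2.1 j := by
  unfold zrun
  rw [take_succ_eq' h]
  simp only [List.map_append, List.sum_append, List.map_cons, List.map_nil,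
    List.sum_cons, List.sum_nil, add_zero, Pi.add_apply]
  ring

lemma mrun_succ (v : Fin d → ℕ) {ρ : List (VTrans d Q)} {i : ℕ} (h : i < ρ.length) :
    mrun v ρ (i+1) = mstep (mrun v ρ i) (ρ.get ⟨i, h⟩).2.1 := by
  unfold mrun
  rw [take_succ_eq' h, List.foldl_append]
  rfl

lemma inf'_range_succ (f : ℕ → ℤ) (n : ℕ) :
    (Finset.range (n+1+1)).inf' Finset.nonempty_range_add_one f
      = f (n+1) ⊓ (Finset.range (n+1)).inf' Finset.nonempty_range_add_one f := by
  rw [Finset.inf'_congr (H := Finset.nonempty_range_add_one) Finset.range_add_one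
    (fun x _ => rfl)]
  exact Finset.inf'_insert (H := Finset.nonempty_range_add_one) (f := f) (b := n+1)

lemma key_lemma (v : Fin d → ℕ) (ρ : List (VTrans d Q)) :
    ∀ i, i ≤ ρ.length → ∀ j,
      (mrun v ρ i j : ℤ) = zrun (ofNatVec v) ρ i j
        - min 0 ((Finset.range (i+1)).inf' Finset.nonempty_range_add_one
            (fun l => zrun (ofNatVec v) ρ l j)) := by
  intro i
  induction i with
  | zero =>
    intro _ j
    simp [mrun, zrun, ofNatVec]
  | succ i ih =>
    intro hle j
    have hi : i < ρ.length := hle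
    have hrec := ih (le_of_lt hi) j
    have hz := zrun_succ (ofNatVec v) hi j
    rw [mrun_succ v hi]
    rw [inf'_range_succ]
    simp only [mstep]
    have htn : ((((mrun v ρ i j : ℤ) + (ρ.get ⟨i, hi⟩).2.1 j).toNat : ℤ))
        = max ((mrun v ρ i j : ℤ) + (ρ.get ⟨i, hi⟩).2.1 j) 0 := Int.toNat_eq_max _
    rw [htn, hrec, hz]
    omega

lemma mi_le_zrun (v : Fin d → ℤ) (ρ : List (VTrans d Q)) {i : ℕ} (h : i ≤ ρ.length)
    (j : Fin d) : mi v ρ j ≤ zrun v ρ i j := by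
  have : i ∈ Finset.range (ρ.length + 1) := Finset.mem_range.mpr (by omega)
  calc mi v ρ j ≤ (Finset.range (ρ.length + 1)).inf' Finset.nonempty_range_add_one
        (fun l => zrun v ρ l j) := min_le_right _ _
    _ ≤ zrun v ρ i j := Finset.inf'_le _ this

lemma mi_nonpos (v : Fin d → ℤ) (ρ : List (VTrans d Q)) (j : Fin d) : mi v ρ j ≤ 0 :=
  min_le_left _ _

lemma zrun_shift (v : Fin d → ℤ) (c : Fin d → ℤ) (ρ : List (VTrans d Q)) (i : ℕ) (j : Fin d) :
    zrun (v - c) ρ i j = zrun v ρ i j - c j := by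
  simp [zrun]; ring

/-- (Proposition: relating monus and classical runs.) Let
`m = mi(ρ,s₀,v₀)`. If the monus run induced by `ρ` from `s₀(v₀)` ends in `v_k`, then
the classical run induced by `ρ` from `s₀(v₀ - m)` exists, starts at `v₀ - m`, and
ends in `v_k`. -/
theorem stmt6 {d : ℕ} {Q : Type*} (V : VASS d Q) (s₀ : Q) (ρ : List (VTrans d Q))
    (v₀ : Fin d → ℕ)
    (hpath : PathIn V ρ) (hfrom : FromState s₀ ρ) :
    ∃ v₀' : Fin d → ℕ, ofNatVec v₀' = ofNatVec v₀ - mi (ofNatVec v₀) ρ ∧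
      ClassicalOK v₀' ρ ∧ zend (ofNatVec v₀') ρ = ofNatVec (mend v₀ ρ) := by
  set m := mi (ofNatVec v₀) ρ with hm
  have hv : ofNatVec (fun j => ((v₀ j : ℤ) - m j).toNat) = ofNatVec v₀ - m := by
    funext j
    have hnp := mi_nonpos (ofNatVec v₀) ρ j
    have h0 : (0:ℤ) ≤ (v₀ j : ℤ) - m j := by
      have : (0:ℤ) ≤ (v₀ j : ℤ) := Int.ofNat_nonneg _
      rw [← hm] at hnp
      omega
    simp only [ofNatVec, Pi.sub_apply]
    exact Int.toNat_of_nonneg h0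
  refine ⟨fun j => ((v₀ j : ℤ) - m j).toNat, hv, ?_, ?_⟩
  · intro i hi j
    rw [hv, zrun_shift]
    have := mi_le_zrun (ofNatVec v₀) ρ hi j
    rw [← hm] at this
    omega
  · funext j
    rw [zend, hv, zrun_shift]
    have hk := key_lemma v₀ ρ ρ.length le_rfl j
    simp only [mend, ofNatVec]
    rw [hk]
    simp only [hm, mi]
end

section
/- Let V=(d,Q,Δ) be a VASS and s(v) a configuration in Q×ℕ^d. Then s(v)⇝*t(0^d) in V (monus semantics) if and only if t(0^d)→*s(v') in rev(V) (classical semantics) for some v'≥v componentwise. -/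
variable {d : ℕ} {Q : Type*}

namespace Stmt10Aux

/-- Flip a transition: swap source and target, negate the update. -/
def flipT (t : VTrans d Q) : VTrans d Q := (t.2.2, -t.2.1, t.1)

/-- The reverse path: flip every transition and reverse the list. -/
def revPath (ρ : List (VTrans d Q)) : List (VTrans d Q) := (ρ.map flipT).reverse

lemma length_revPath (ρ : List (VTrans d Q)) : (revPath ρ).length = ρ.length := by
  simp [revPath]

lemma revPath_cons (b : VTrans d Q) (l : List (VTrans d Q)) :
    revPath (b :: l) = revPath l ++ [flipT b] := by simp [revPath]

lemma revPath_concat (l : List (VTrans d Q)) (a : VTrans d Q) :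
    revPath (l ++ [a]) = flipT a :: revPath l := by simp [revPath]

lemma list_sum_apply (l : List (Fin d → ℤ)) (j : Fin d) :
    l.sum j = (l.map (fun f => f j)).sum := by
  induction l with
  | nil => rfl
  | cons a l ih => simp [List.sum_cons, Pi.add_apply, ih]

lemma sum_map_neg {α : Type*} (l : List α) (g : α → ℤ) :
    (l.map (fun x => -g x)).sum = -(l.map g).sum := by
  induction l with
  | nil => simp
  | cons a l ih => simp [ih]; ring

lemma zrun_apply (v : Fin d → ℤ) (ρ : List (VTrans d Q)) (i : ℕ) (j : Fin d) :
    zrun v ρ i j = v j + ((ρ.take i).map (fun t => t.2.1 j)).sum := by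
  simp only [zrun, Pi.add_apply, list_sum_apply, List.map_take, List.map_map]
  rfl

lemma zrun_succ (v : Fin d → ℤ) (ρ : List (VTrans d Q)) {i : ℕ} (h : i < ρ.length)
    (j : Fin d) : zrun v ρ (i+1) j = zrun v ρ i j + (ρ[i]'h).2.1 j := by
  rw [zrun_apply, zrun_apply, List.take_succ, List.getElem?_eq_getElem h,
    List.map_append, List.sum_append, add_assoc]
  simp

lemma mrun_zero (v : Fin d → ℕ) (ρ : List (VTrans d Q)) : mrun v ρ 0 = v := rfl

lemma mrun_succ (v : Fin d → ℕ) (ρ : List (VTrans d Q)) {i : ℕ} (h : i < ρ.length) :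
    mrun v ρ (i+1) = mstep (mrun v ρ i) (ρ[i]'h).2.1 := by
  unfold mrun
  rw [List.take_succ, List.getElem?_eq_getElem h,
    show (some (ρ[i]'h)).toList = [ρ[i]'h] from rfl, List.foldl_append]
  rfl

lemma mrun_mono {v w : Fin d → ℕ} (h : v ≤ w) (ρ : List (VTrans d Q)) (i : ℕ) :
    mrun v ρ i ≤ mrun w ρ i := by
  unfold mrun
  generalize ρ.take i = l
  induction l generalizing v w with
  | nil => exact h
  | cons a l ih =>
      refine ih ?_
      intro j
      have hj : (v j : ℤ) ≤ (w j : ℤ) := by exact_mod_cast h j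
      simp only [mstep]
      omega

/-- Key inequality: along a monus run, the value plus the remaining updates
is at most the final value. -/
lemma mrun_le (v : Fin d → ℕ) (ρ : List (VTrans d Q)) :
    ∀ n m, m + n = ρ.length → ∀ j,
      (mrun v ρ m j : ℤ) + ((ρ.drop m).map (fun t => t.2.1 j)).sum ≤ (mend v ρ j : ℤ) := by
  intro n
  induction n with
  | zero =>
      intro m hm j
      have hm' : m = ρ.length := by omega
      subst hm'
      simp [mend]
  | succ n ih =>
      intro m hm j
      have h : m < ρ.length := by omega
      have ih' := ih (m+1) (by omega) j
      have hstep : (mrun v ρ m j : ℤ) + (ρ[m]'h).2.1 j ≤ (mrun v ρ (m+1) j : ℤ) := by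
        rw [mrun_succ v ρ h]
        simpa [mstep] using Int.self_le_toNat ((mrun v ρ m j : ℤ) + (ρ[m]'h).2.1 j)
      rw [List.drop_eq_getElem_cons h]
      simp only [List.map_cons, List.sum_cons]
      linarith

lemma mrun_eq_zrun (v : Fin d → ℕ) (ρ : List (VTrans d Q)) (hok : ClassicalOK v ρ) :
    ∀ i, i ≤ ρ.length → ∀ j, (mrun v ρ i j : ℤ) = zrun (ofNatVec v) ρ i j := by
  intro i
  induction i with
  | zero => intro _ j; simp [mrun_zero, zrun_apply, ofNatVec]
  | succ i ih =>
      intro hi j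
      have h : i < ρ.length := hi
      have hnn : 0 ≤ zrun (ofNatVec v) ρ (i+1) j := hok (i+1) hi j
      rw [zrun_succ (ofNatVec v) ρ h j] at hnn
      rw [mrun_succ v ρ h, zrun_succ (ofNatVec v) ρ h j]
      simp only [mstep]
      rw [ih (le_of_lt h) j, Int.toNat_of_nonneg hnn]

lemma isPath_revPath {ρ : List (VTrans d Q)} (h : IsPath ρ) : IsPath (revPath ρ) := by
  unfold IsPath revPath at *
  unfold List.Chain' at *
  rw [List.isChain_reverse, List.isChain_map]
  exact List.IsChain.imp (fun a b hab => hab.symm) h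

lemma pathIn_revPath {V : VASS d Q} {ρ : List (VTrans d Q)} (h : PathIn V ρ) :
    PathIn (revV V) (revPath ρ) := by
  refine ⟨isPath_revPath h.1, ?_⟩
  intro u hu
  rw [revPath, List.mem_reverse, List.mem_map] at hu
  obtain ⟨a, ha, rfl⟩ := hu
  have := h.2 a ha
  simpa [revV, flipT] using this

lemma revV_revV (V : VASS d Q) : revV (revV V) = V := by
  cases V with
  | mk Δ =>
      unfold revV
      congr 1
      ext ⟨p, z, q⟩
      simp

lemma fromState_revPath {s t : Q} {ρ : List (VTrans d Q)} (h2 : endState s ρ = t) :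
    FromState t (revPath ρ) := by
  rcases ρ.eq_nil_or_concat with rfl | ⟨l, a, rfl⟩
  · trivial
  · rw [List.concat_eq_append] at *
    rw [revPath_concat]
    show (flipT a).1 = t
    rw [← h2]
    simp [flipT, endState]

lemma endState_revPath {s t : Q} {ρ : List (VTrans d Q)} (h1 : FromState s ρ)
    (h2 : endState s ρ = t) : endState t (revPath ρ) = s := by
  cases ρ with
  | nil => exact h2.symm
  | cons b l =>
      rw [revPath_cons]
      show ((revPath l ++ [flipT b]).map (fun t => t.2.2)).getLastD t = s
      rw [List.map_append]
      simp only [List.map_cons, List.map_nil, List.getLastD_concat]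
      exact h1

lemma zrun_revPath (w : Fin d → ℤ) (ρ : List (VTrans d Q)) (i : ℕ) (j : Fin d) :
    zrun w (revPath ρ) i j
      = w j - ((ρ.drop (ρ.length - i)).map (fun t => t.2.1 j)).sum := by
  rw [zrun_apply, sub_eq_add_neg]
  congr 1
  rw [List.map_take, revPath, List.map_reverse, List.take_reverse, List.sum_reverse,
    List.map_map, List.length_map]
  rw [show ((fun t : VTrans d Q => t.2.1 j) ∘ flipT) = (fun t => -(t.2.1 j)) from rfl]
  rw [show (fun t : VTrans d Q => -(t.2.1 j)) = (fun t => -((fun u : VTrans d Q => u.2.1 j) t)) from rfl,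
    ← List.map_drop, sum_map_neg]

lemma sum_take_drop (ρ : List (VTrans d Q)) (g : VTrans d Q → ℤ) (m : ℕ) :
    ((ρ.take m).map g).sum + ((ρ.drop m).map g).sum = (ρ.map g).sum := by
  rw [← List.sum_append, ← List.map_append, List.take_append_drop]

end Stmt10Aux

open Stmt10Aux in
/-- (Characterization of monus zero reachability.)
`s(v) ⇝* t(0)` in `V` (monus semantics) iff `t(0) →* s(v')` in `rev(V)`
(classical semantics) for some `v' ≥ v`. -/
theorem stmt10 {d : ℕ} {Q : Type*} (V : VASS d Q) (s t : Q) (v : Fin d → ℕ) :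
    MonusReach V s v t 0 ↔
    ∃ v' : Fin d → ℕ, v ≤ v' ∧ ClassicalReach (revV V) t 0 s v' := by
  constructor
  · rintro ⟨ρ, hρ, hfrom, hend, hmend⟩
    have key : ∀ m, m ≤ ρ.length → ∀ j,
        (mrun v ρ m j : ℤ) ≤ -((ρ.drop m).map (fun t => t.2.1 j)).sum := by
      intro m hm j
      have h := mrun_le v ρ (ρ.length - m) m (by omega) j
      rw [hmend] at h
      simp only [Pi.zero_apply, Nat.cast_zero] at h
      linarith
    have hz : ofNatVec (0 : Fin d → ℕ) = (0 : Fin d → ℤ) := by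
      funext j; simp [ofNatVec]
    refine ⟨fun j => (-(ρ.map (fun t => t.2.1 j)).sum).toNat, ?_, revPath ρ,
      pathIn_revPath hρ, fromState_revPath hend, endState_revPath hfrom hend, ?_, ?_⟩
    · intro j
      have hkey := key 0 (Nat.zero_le _) j
      rw [mrun_zero, List.drop_zero] at hkey
      simp only
      omega
    · intro i hi j
      rw [length_revPath] at hi
      rw [zrun_revPath]
      have hkey := key (ρ.length - i) (by omega) j
      have h0 : (0:ℤ) ≤ (mrun v ρ (ρ.length - i) j : ℤ) := Int.natCast_nonneg _
      rw [hz]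
      simp only [Pi.zero_apply]
      linarith
    · funext j
      rw [show zend (ofNatVec (0 : Fin d → ℕ)) (revPath ρ) j
            = zrun (ofNatVec 0) (revPath ρ) (revPath ρ).length j from rfl,
        zrun_revPath, length_revPath, Nat.sub_self, List.drop_zero, hz]
      have hkey := key 0 (Nat.zero_le _) j
      rw [mrun_zero, List.drop_zero] at hkey
      have h0 : (0:ℤ) ≤ -(ρ.map (fun t => t.2.1 j)).sum :=
        le_trans (Int.natCast_nonneg _) hkey
      simp only [Pi.zero_apply, zero_sub, ofNatVec]
      rw [Int.toNat_of_nonneg h0]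
  · rintro ⟨v', hle, ρ, hρ, hfrom, hend, hok, hzend⟩
    have hsum : ∀ j, (ρ.map (fun t => t.2.1 j)).sum = (v' j : ℤ) := by
      intro j
      have h := congrFun hzend j
      rw [show zend (ofNatVec (0 : Fin d → ℕ)) ρ j
            = zrun (ofNatVec 0) ρ ρ.length j from rfl,
        zrun_apply, List.take_length] at h
      simpa [ofNatVec] using h
    have hok' : ClassicalOK v' (revPath ρ) := by
      intro i hi j
      rw [length_revPath] at hi
      rw [zrun_revPath]
      have hsp := sum_take_drop ρ (fun t => t.2.1 j) (ρ.length - i)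
      have h2 := hok (ρ.length - i) (by omega) j
      rw [zrun_apply] at h2
      simp only [ofNatVec, Pi.zero_apply, Nat.cast_zero, zero_add] at h2
      have hs := hsum j
      simp only [ofNatVec]
      linarith
    have hzend' : ∀ j, zend (ofNatVec v') (revPath ρ) j = 0 := by
      intro j
      rw [show zend (ofNatVec v') (revPath ρ) j
            = zrun (ofNatVec v') (revPath ρ) (revPath ρ).length j from rfl,
        zrun_revPath, length_revPath, Nat.sub_self, List.drop_zero, hsum j]
      simp [ofNatVec]
    have hm' : mend v' (revPath ρ) = 0 := by
      funext j
      have h := mrun_eq_zrun v' (revPath ρ) hok' (revPath ρ).length le_rfl j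
      rw [show zrun (ofNatVec v') (revPath ρ) (revPath ρ).length j = (0:ℤ)
            from hzend' j] at h
      have h' : mrun v' (revPath ρ) (revPath ρ).length j = 0 := by exact_mod_cast h
      simpa [mend] using h'
    refine ⟨revPath ρ, ?_, fromState_revPath hend, endState_revPath hfrom hend, ?_⟩
    · have h := pathIn_revPath hρ
      rwa [revV_revV] at h
    · funext j
      have h1 : mrun v (revPath ρ) (revPath ρ).length j
          ≤ mrun v' (revPath ρ) (revPath ρ).length j :=
        mrun_mono hle (revPath ρ) (revPath ρ).length j
      have h2 : mrun v' (revPath ρ) (revPath ρ).length j = 0 := by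
        have := congrFun hm' j
        simpa [mend] using this
      show mrun v (revPath ρ) (revPath ρ).length j = (0 : Fin d → ℕ) j
      simp only [Pi.zero_apply]
      omega
end

section
/- Let V=(d,Q,T) be a VASS with states s,t∈Q, and let V'=(d+2,Q∪{t'},T') be constructed from V as follows, where t' is a fresh state: for z∈ℤ^d let Δ(z)=Σ_{j=1}^d z[j] and let extend(z)∈ℤ^{d+2} be (z,Δ(z),0) if Δ(z)≥0 and (z,0,−Δ(z)) otherwise; T' consists of (p,extend(z),q) for every (p,z,q)∈T, the transition (t,0,t'), and the loop (t',(0^d,−1,−1),t'). Then s(0^d,1,1)⇝*t'(0^d,1,1) in V' (monus semantics) if and only if s(0^d)→*t(0^d) in V (classical semantics). -/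
variable {d : ℕ} {Q : Type*}

/-- `Δ(z) = Σ_j z[j]`, the sum of all components. -/
def effSum {d : ℕ} (z : Fin d → ℤ) : ℤ := ∑ j, z j

/-- `extend(z) ∈ ℤ^{d+2}`: equals `(z, Δ(z), 0)` if `Δ(z) ≥ 0`,
and `(z, 0, -Δ(z))` otherwise. -/
def extendVec {d : ℕ} (z : Fin d → ℤ) : Fin (d + 2) → ℤ := fun j =>
  if h : (j : ℕ) < d then z ⟨j, h⟩
  else if (j : ℕ) = d then max (effSum z) 0
  else - min (effSum z) 0

/-- The VASS `V' = (d+2, Q ∪ {t'}, T')` with `T'` consisting of `(p, extend(z), q)`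
for every `(p,z,q) ∈ T`, the transition `(t, 0, t')`, and the count-down loop
`(t', (0^d, -1, -1), t')`. The fresh state `t'` is `Sum.inr ()`. -/
def ackVASS {d : ℕ} {Q : Type*} (V : VASS d Q) (t : Q) : VASS (d + 2) (Q ⊕ Unit) :=
  ⟨{tr | (∃ p z q, (p, z, q) ∈ V.Δ ∧ tr = (Sum.inl p, extendVec z, Sum.inl q)) ∨
         tr = (Sum.inl t, 0, Sum.inr ()) ∨
         tr = (Sum.inr (), (fun j : Fin (d + 2) => if (j : ℕ) < d then (0 : ℤ) else -1), Sum.inr ())}⟩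

/-- The vector `(v, 1, 1) ∈ ℕ^{d+2}`. -/
def padOneOne {d : ℕ} (v : Fin d → ℕ) : Fin (d + 2) → ℕ := fun j =>
  if h : (j : ℕ) < d then v ⟨j, h⟩ else 1


namespace Stmt12Aux

variable {d : ℕ} {Q : Type*}

/-! ### Basic run lemmas -/

lemma mrun_zero (v : Fin d → ℕ) (ρ : List (VTrans d Q)) : mrun v ρ 0 = v := rfl

lemma zrun_zero (v : Fin d → ℤ) (ρ : List (VTrans d Q)) : zrun v ρ 0 = v := by
  simp [zrun]

lemma mend_eq_foldl (v : Fin d → ℕ) (ρ : List (VTrans d Q)) :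
    mend v ρ = ρ.foldl (fun u t => mstep u t.2.1) v := by
  simp [mend, mrun]

lemma mend_nil (v : Fin d → ℕ) : mend v ([] : List (VTrans d Q)) = v := rfl

lemma mend_cons (v : Fin d → ℕ) (a : VTrans d Q) (l : List (VTrans d Q)) :
    mend v (a :: l) = mend (mstep v a.2.1) l := by
  simp [mend_eq_foldl]

lemma mend_append (v : Fin d → ℕ) (l₁ l₂ : List (VTrans d Q)) :
    mend v (l₁ ++ l₂) = mend (mend v l₁) l₂ := by
  simp [mend_eq_foldl, List.foldl_append]

lemma mrun_succ_cons (v : Fin d → ℕ) (a : VTrans d Q) (l : List (VTrans d Q)) (i : ℕ) :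
    mrun v (a :: l) (i + 1) = mrun (mstep v a.2.1) l i := by
  simp [mrun, List.take_succ_cons]

lemma zrun_succ_cons (v : Fin d → ℤ) (a : VTrans d Q) (l : List (VTrans d Q)) (i : ℕ) :
    zrun v (a :: l) (i + 1) = zrun (v + a.2.1) l i := by
  simp [zrun, List.take_succ_cons, add_assoc]

lemma mend_def' (v : Fin d → ℕ) (ρ : List (VTrans d Q)) : mrun v ρ ρ.length = mend v ρ := rfl

lemma zend_def' (v : Fin d → ℤ) (ρ : List (VTrans d Q)) : zrun v ρ ρ.length = zend v ρ := rfl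

/-! ### The embedding of `ℕ^d` configurations with two extra counters -/

/-- `(v, a, b) ∈ ℕ^{d+2}`. -/
def Ev (v : Fin d → ℕ) (a b : ℕ) : Fin (d + 2) → ℕ := fun j =>
  if h : (j : ℕ) < d then v ⟨j, h⟩ else if (j : ℕ) = d then a else b

lemma padOneOne_eq (v : Fin d → ℕ) : padOneOne v = Ev v 1 1 := by
  funext j
  unfold padOneOne Ev
  split <;> simp

lemma Ev_inj {v w : Fin d → ℕ} {a b a' b' : ℕ} (h : Ev v a b = Ev w a' b') :
    v = w ∧ a = a' ∧ b = b' := by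
  refine ⟨funext fun j => ?_, ?_, ?_⟩
  · have := congrFun h ⟨(j : ℕ), by omega⟩
    simpa [Ev, j.isLt] using this
  · have := congrFun h ⟨d, by omega⟩
    simpa [Ev] using this
  · have := congrFun h ⟨d + 1, by omega⟩
    simpa [Ev] using this

/-- The map on transitions used by `ackVASS`. -/
def ackF : VTrans d Q → VTrans (d + 2) (Q ⊕ Unit) :=
  fun x => (Sum.inl x.1, extendVec x.2.1, Sum.inl x.2.2)

/-- The countdown loop transition. -/
def ackLoop (d : ℕ) (Q : Type*) : VTrans (d + 2) (Q ⊕ Unit) :=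
  (Sum.inr (), (fun j : Fin (d + 2) => if (j : ℕ) < d then (0 : ℤ) else -1), Sum.inr ())

/-- The bridge transition. -/
def ackBridge (t : Q) : VTrans (d + 2) (Q ⊕ Unit) := (Sum.inl t, 0, Sum.inr ())

/-- Total positive effect. -/
def Pval (ρ : List (VTrans d Q)) : ℕ := (ρ.map fun x => (effSum x.2.1).toNat).sum

/-- Total negative effect. -/
def Nval (ρ : List (VTrans d Q)) : ℕ := (ρ.map fun x => (-effSum x.2.1).toNat).sum

lemma mstep_extend (v : Fin d → ℕ) (a b : ℕ) (z : Fin d → ℤ) :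
    mstep (Ev v a b) (extendVec z) =
      Ev (mstep v z) (a + (effSum z).toNat) (b + (-effSum z).toNat) := by
  funext j
  by_cases h : (j : ℕ) < d
  · simp only [mstep, Ev, extendVec, dif_pos h]
  · by_cases h2 : (j : ℕ) = d
    · simp only [mstep, Ev, extendVec, dif_neg h, if_pos h2]
      omega
    · simp only [mstep, Ev, extendVec, dif_neg h, if_neg h2]
      omega

lemma mstep_zero (v : Fin d → ℕ) : mstep v (0 : Fin d → ℤ) = v := by
  funext j; simp [mstep]

lemma mstep_loop (v : Fin d → ℕ) (a b : ℕ) :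
    mstep (Ev v a b) (ackLoop d Q).2.1 = Ev v (a - 1) (b - 1) := by
  funext j
  by_cases h : (j : ℕ) < d
  · simp only [mstep, Ev, ackLoop, dif_pos h, if_pos h]
    omega
  · by_cases h2 : (j : ℕ) = d
    · simp only [mstep, Ev, ackLoop, dif_neg h, if_neg h, if_pos h2]
      omega
    · simp only [mstep, Ev, ackLoop, dif_neg h, if_neg h, if_neg h2]
      omega

lemma mend_mapF (ρ : List (VTrans d Q)) : ∀ (v : Fin d → ℕ) (a b : ℕ),
    mend (Ev v a b) (ρ.map ackF) = Ev (mend v ρ) (a + Pval ρ) (b + Nval ρ) := by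
  induction ρ with
  | nil => intro v a b; simp [mend_nil, Pval, Nval]
  | cons x l ih =>
    intro v a b
    rw [List.map_cons, mend_cons, mend_cons]
    have : (ackF x).2.1 = extendVec x.2.1 := rfl
    rw [this, mstep_extend, ih]
    have hP : Pval (x :: l) = (effSum x.2.1).toNat + Pval l := by simp [Pval]
    have hN : Nval (x :: l) = (-effSum x.2.1).toNat + Nval l := by simp [Nval]
    rw [hP, hN, Nat.add_assoc, Nat.add_assoc]

lemma mend_replicate (v : Fin d → ℕ) (m : ℕ) : ∀ a b : ℕ,
    mend (Ev v a b) (List.replicate m (ackLoop d Q)) = Ev v (a - m) (b - m) := by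
  induction m with
  | zero => intro a b; simp [mend_nil]
  | succ m ih =>
    intro a b
    rw [List.replicate_succ, mend_cons, mstep_loop, ih]
    have h1 : a - 1 - m = a - (m + 1) := by omega
    have h2 : b - 1 - m = b - (m + 1) := by omega
    rw [h1, h2]

lemma PN_sub (ρ : List (VTrans d Q)) :
    (Pval ρ : ℤ) - (Nval ρ : ℤ) = (ρ.map fun x => effSum x.2.1).sum := by
  induction ρ with
  | nil => simp [Pval, Nval]
  | cons x l ih =>
    simp only [Pval, Nval, List.map_cons, List.sum_cons] at *
    rw [Nat.cast_add, Nat.cast_add]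
    omega

lemma effSum_list_sum (ρ : List (VTrans d Q)) :
    (ρ.map fun x => effSum x.2.1).sum = effSum (ρ.map fun x => x.2.1).sum := by
  induction ρ with
  | nil => simp [effSum]
  | cons x l ih =>
    simp only [List.map_cons, List.sum_cons, ih]
    simp [effSum, Finset.sum_add_distrib]

/-! ### Losslessness -/

lemma mstep_ge (v : Fin d → ℕ) (z : Fin d → ℤ) (j : Fin d) :
    (v j : ℤ) + z j ≤ (mstep v z j : ℤ) := Int.self_le_toNat _

lemma sum_mstep_ge (v : Fin d → ℕ) (z : Fin d → ℤ) :
    ∑ j, (v j : ℤ) + effSum z ≤ ∑ j, (mstep v z j : ℤ) := by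
  rw [effSum, ← Finset.sum_add_distrib]
  exact Finset.sum_le_sum fun j _ => mstep_ge v z j

lemma sum_mend_ge (ρ : List (VTrans d Q)) : ∀ v : Fin d → ℕ,
    ∑ j, (v j : ℤ) + (ρ.map fun x => effSum x.2.1).sum ≤ ∑ j, (mend v ρ j : ℤ) := by
  induction ρ with
  | nil => intro v; simp [mend_nil]
  | cons a l ih =>
    intro v
    rw [mend_cons]
    have h1 := sum_mstep_ge v a.2.1
    have h2 := ih (mstep v a.2.1)
    simp only [List.map_cons, List.sum_cons]
    linarith

lemma mstep_exact_of_sum {v : Fin d → ℕ} {z : Fin d → ℤ}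
    (h : ∑ j, (mstep v z j : ℤ) = ∑ j, (v j : ℤ) + effSum z) :
    ∀ j, (mstep v z j : ℤ) = (v j : ℤ) + z j := by
  rw [effSum, ← Finset.sum_add_distrib] at h
  intro j
  by_contra hne
  have hlt : (v j : ℤ) + z j < (mstep v z j : ℤ) := lt_of_le_of_ne (mstep_ge v z j) (Ne.symm hne)
  have := Finset.sum_lt_sum (fun i _ => mstep_ge v z i) ⟨j, Finset.mem_univ j, hlt⟩
  omega

lemma lossless_of_sum (ρ : List (VTrans d Q)) : ∀ v : Fin d → ℕ,
    (∑ j, (mend v ρ j : ℤ)) = ∑ j, (v j : ℤ) + (ρ.map fun x => effSum x.2.1).sum →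
    ∀ i ≤ ρ.length, ∀ j, (mrun v ρ i j : ℤ) = zrun (ofNatVec v) ρ i j := by
  induction ρ with
  | nil =>
    intro v h i hi j
    have : i = 0 := by simpa using hi
    subst this
    simp [mrun_zero, zrun_zero, ofNatVec]
  | cons a l ih =>
    intro v h i hi j
    rw [mend_cons] at h
    simp only [List.map_cons, List.sum_cons] at h
    have hge1 := sum_mstep_ge v a.2.1
    have hge2 := sum_mend_ge l (mstep v a.2.1)
    have hsum' : ∑ j, ((mstep v a.2.1) j : ℤ) = ∑ j, (v j : ℤ) + effSum a.2.1 := by linarith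
    have hmend : ∑ j, (mend (mstep v a.2.1) l j : ℤ) =
        ∑ j, ((mstep v a.2.1) j : ℤ) + (l.map fun x => effSum x.2.1).sum := by linarith
    have hpt := mstep_exact_of_sum hsum'
    have hofv' : ofNatVec (mstep v a.2.1) = ofNatVec v + a.2.1 := funext fun j => hpt j
    match i with
    | 0 => simp [mrun_zero, zrun_zero, ofNatVec]
    | Nat.succ i =>
      rw [mrun_succ_cons, zrun_succ_cons, ← hofv']
      exact ih (mstep v a.2.1) hmend i (by simpa using hi) j

lemma classical_mrun (ρ : List (VTrans d Q)) : ∀ v : Fin d → ℕ, ClassicalOK v ρ →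
    ∀ i ≤ ρ.length, ∀ j, (mrun v ρ i j : ℤ) = zrun (ofNatVec v) ρ i j := by
  induction ρ with
  | nil =>
    intro v _ i hi j
    have : i = 0 := by simpa using hi
    subst this
    simp [mrun_zero, zrun_zero, ofNatVec]
  | cons a l ih =>
    intro v hOK i hi j
    have h1 : ∀ j, (0 : ℤ) ≤ ofNatVec v j + a.2.1 j := by
      intro j
      have := hOK 1 (by simp) j
      rwa [show (1 : ℕ) = 0 + 1 from rfl, zrun_succ_cons, zrun_zero] at this
    have hpt : ∀ j, ((mstep v a.2.1) j : ℤ) = (v j : ℤ) + a.2.1 j := by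
      intro j
      exact Int.toNat_of_nonneg (h1 j)
    have hofv' : ofNatVec (mstep v a.2.1) = ofNatVec v + a.2.1 := funext fun j => hpt j
    have hOK' : ClassicalOK (mstep v a.2.1) l := by
      intro i hi j
      have := hOK (i + 1) (by simp; omega) j
      rwa [zrun_succ_cons, ← hofv'] at this
    match i with
    | 0 => simp [mrun_zero, zrun_zero, ofNatVec]
    | Nat.succ i =>
      rw [mrun_succ_cons, zrun_succ_cons, ← hofv']
      exact ih (mstep v a.2.1) hOK' i (by simpa using hi) j

/-! ### Path structure -/

/-- A recursive characterization of paths starting at `p`. -/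
def ChainFrom (p : Q) : List (VTrans d Q) → Prop
  | [] => True
  | a :: l => a.1 = p ∧ ChainFrom a.2.2 l

lemma chainFrom_iff (ρ : List (VTrans d Q)) : ∀ p : Q,
    (IsPath ρ ∧ FromState p ρ) ↔ ChainFrom p ρ := by
  induction ρ with
  | nil => intro p; simp [IsPath, FromState, ChainFrom]; exact List.isChain_nil
  | cons a l ih =>
    intro p
    constructor
    · rintro ⟨hp, hf⟩
      have hc := List.isChain_cons.mp hp
      refine ⟨hf, (ih a.2.2).mp ⟨hc.2, ?_⟩⟩
      cases l with
      | nil => trivial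
      | cons b l' => exact (hc.1 b rfl).symm
    · rintro ⟨h1, h2⟩
      obtain ⟨hp, hf⟩ := (ih a.2.2).mpr h2
      refine ⟨List.isChain_cons.mpr ⟨?_, hp⟩, h1⟩
      intro b hb
      cases l with
      | nil => simp at hb
      | cons c l' =>
        simp only [List.head?_cons, Option.mem_def, Option.some.injEq] at hb
        subst hb
        exact hf.symm

lemma endState_nil (p : Q) : endState p ([] : List (VTrans d Q)) = p := rfl

lemma endState_cons (p : Q) (a : VTrans d Q) (l : List (VTrans d Q)) :
    endState p (a :: l) = endState a.2.2 l := by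
  unfold endState
  rw [List.map_cons, List.getLastD_cons]

lemma endState_append (l₁ l₂ : List (VTrans d Q)) : ∀ p : Q,
    endState p (l₁ ++ l₂) = endState (endState p l₁) l₂ := by
  induction l₁ with
  | nil => intro p; rfl
  | cons a l ih => intro p; rw [List.cons_append, endState_cons, endState_cons, ih]

lemma chainFrom_append {l₁ l₂ : List (VTrans d Q)} : ∀ {p : Q},
    ChainFrom p l₁ → ChainFrom (endState p l₁) l₂ → ChainFrom p (l₁ ++ l₂) := by
  induction l₁ with
  | nil => intro p _ h; exact h
  | cons a l ih =>
    intro p h1 h2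
    rw [endState_cons] at h2
    exact ⟨h1.1, ih h1.2 h2⟩

lemma chainFrom_map {ρ : List (VTrans d Q)} : ∀ {p : Q}, ChainFrom p ρ →
    ChainFrom (Sum.inl p : Q ⊕ Unit) (ρ.map ackF) := by
  induction ρ with
  | nil => intro p _; trivial
  | cons a l ih =>
    intro p h
    exact ⟨congrArg Sum.inl h.1, ih h.2⟩

lemma endState_map (ρ : List (VTrans d Q)) : ∀ p : Q,
    endState (Sum.inl p : Q ⊕ Unit) (ρ.map ackF) = Sum.inl (endState p ρ) := by
  induction ρ with
  | nil => intro p; rfl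
  | cons a l ih =>
    intro p
    rw [List.map_cons, endState_cons, endState_cons]
    exact ih a.2.2

lemma chainFrom_replicate (m : ℕ) :
    ChainFrom (Sum.inr () : Q ⊕ Unit) (List.replicate m (ackLoop d Q)) := by
  induction m with
  | zero => trivial
  | succ m ih => exact ⟨rfl, ih⟩

lemma endState_replicate (m : ℕ) :
    endState (Sum.inr () : Q ⊕ Unit) (List.replicate m (ackLoop d Q)) = Sum.inr () := by
  induction m with
  | zero => rfl
  | succ m ih => rw [List.replicate_succ, endState_cons]; exact ih

/-- Every path of `ackVASS V t` from a `V`-state to `t'` decomposes. -/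
lemma decompose (V : VASS d Q) (t : Q) (ρ' : List (VTrans (d + 2) (Q ⊕ Unit))) :
    ∀ p : Q, ChainFrom (Sum.inl p : Q ⊕ Unit) ρ' →
    (∀ x ∈ ρ', x ∈ (ackVASS V t).Δ) →
    endState (Sum.inl p : Q ⊕ Unit) ρ' = Sum.inr () →
    ∃ (ρ : List (VTrans d Q)) (m : ℕ),
      ρ' = ρ.map ackF ++ ackBridge t :: List.replicate m (ackLoop d Q) ∧
      ChainFrom p ρ ∧ endState p ρ = t ∧ ∀ x ∈ ρ, x ∈ V.Δ := by
  induction ρ' with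
  | nil =>
    intro p _ _ hend
    exact absurd hend (by simp [endState_nil])
  | cons a l ih =>
    intro p hcf hmem hend
    have hmemtl : ∀ x ∈ l, x ∈ (ackVASS V t).Δ := fun x hx => hmem x (List.mem_cons_of_mem a hx)
    have ha := hmem a List.mem_cons_self
    rcases ha with ⟨p₀, z, q, hzmem, haeq⟩ | haeq | haeq
    · -- simulated transition
      subst haeq
      obtain ⟨h1, h2⟩ := hcf
      have hp : p₀ = p := Sum.inl.inj h1
      subst hp
      rw [endState_cons] at hend
      obtain ⟨ρ₀, m, hdec, hcf₀, hend₀, hmem₀⟩ :=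
        ih q h2 hmemtl hend
      refine ⟨(p₀, z, q) :: ρ₀, m, ?_, ⟨rfl, hcf₀⟩, ?_, ?_⟩
      · rw [List.map_cons, hdec]; rfl
      · rw [endState_cons]; exact hend₀
      · intro x hx
        rcases List.mem_cons.mp hx with h | h
        · subst h; exact hzmem
        · exact hmem₀ x h
    · -- bridge transition
      subst haeq
      obtain ⟨h1, h2⟩ := hcf
      have hp : t = p := Sum.inl.inj h1
      -- all remaining transitions are loops
      have hloops : ∀ (l' : List (VTrans (d + 2) (Q ⊕ Unit))),
          ChainFrom (Sum.inr () : Q ⊕ Unit) l' →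
          (∀ x ∈ l', x ∈ (ackVASS V t).Δ) → l' = List.replicate l'.length (ackLoop d Q) := by
        intro l'
        induction l' with
        | nil => intro _ _; rfl
        | cons b l'' ih' =>
          intro hcf' hmem'
          have hmem'' : ∀ x ∈ l'', x ∈ (ackVASS V t).Δ :=
            fun x hx => hmem' x (List.mem_cons_of_mem b hx)
          have hb := hmem' b List.mem_cons_self
          rcases hb with ⟨p₁, z₁, q₁, _, hbeq⟩ | hbeq | hbeq
          · exact absurd hcf'.1 (by rw [hbeq]; simp)
          · exact absurd hcf'.1 (by rw [hbeq]; simp)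
          · have hcf'' : ChainFrom (Sum.inr () : Q ⊕ Unit) l'' := by
              have h' := hcf'.2
              rw [hbeq] at h'
              exact h'
            rw [List.length_cons, List.replicate_succ, hbeq, ← ih' hcf'' hmem'']
            rfl
      have hl := hloops l h2 hmemtl
      refine ⟨[], l.length, ?_, trivial, hp.symm, by simp⟩
      conv_lhs => rw [hl]
      rfl
    · -- loop transition: impossible from Sum.inl
      exact absurd hcf.1 (by subst haeq; simp)

end Stmt12Aux

/-- `s(0^d,1,1) ⇝* t'(0^d,1,1)` in `V'` (monus semantics)
iff `s(0^d) →* t(0^d)` in `V` (classical semantics). -/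
theorem stmt12 {d : ℕ} {Q : Type*} (V : VASS d Q) (s t : Q) :
    MonusReach (ackVASS V t) (Sum.inl s) (padOneOne 0) (Sum.inr ()) (padOneOne 0) ↔
    ClassicalReach V s 0 t 0 := by
  open Stmt12Aux in
  constructor
  · rintro ⟨ρ', ⟨hIsP, hmem⟩, hFrom, hEnd, hmend⟩
    have hcf : ChainFrom (Sum.inl s : Q ⊕ Unit) ρ' := (chainFrom_iff ρ' _).mp ⟨hIsP, hFrom⟩
    obtain ⟨ρ, m, hdec, hcfρ, hendρ, hmemρ⟩ := decompose V t ρ' s hcf hmem hEnd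
    subst hdec
    have hb : (ackBridge t : VTrans (d + 2) (Q ⊕ Unit)).2.1 = (0 : Fin (d + 2) → ℤ) := rfl
    rw [padOneOne_eq, mend_append, mend_mapF, mend_cons, hb, mstep_zero, mend_replicate] at hmend
    obtain ⟨hv0, hP, hN⟩ := Ev_inj hmend
    have hPm : Pval ρ = m := by omega
    have hNm : Nval ρ = m := by omega
    have heff : (ρ.map fun x => effSum x.2.1).sum = 0 := by
      have h := PN_sub ρ
      rw [hPm, hNm] at h
      omega
    have hsum : (∑ j, (mend (0 : Fin d → ℕ) ρ j : ℤ)) =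
        ∑ j, (((0 : Fin d → ℕ) j : ℤ)) + (ρ.map fun x => effSum x.2.1).sum := by
      rw [hv0, heff]
      simp
    have hexact := lossless_of_sum ρ 0 hsum
    obtain ⟨hIsPρ, hFromρ⟩ := (chainFrom_iff ρ s).mpr hcfρ
    refine ⟨ρ, ⟨hIsPρ, hmemρ⟩, hFromρ, hendρ, ?_, ?_⟩
    · intro i hi j
      rw [← hexact i hi j]
      exact Int.natCast_nonneg _
    · funext j
      have h := hexact ρ.length le_rfl j
      rw [zend_def'] at h
      rw [← h, mend_def', hv0]
      simp [ofNatVec]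
  · rintro ⟨ρ, ⟨hIsP, hmem⟩, hFrom, hEnd, hOK, hZ⟩
    have hcf := (chainFrom_iff ρ s).mp ⟨hIsP, hFrom⟩
    have hexact := classical_mrun ρ 0 hOK
    have hzendeq : zend (ofNatVec (0 : Fin d → ℕ)) ρ =
        ofNatVec (0 : Fin d → ℕ) + (ρ.map fun x => x.2.1).sum := by
      simp [zend, zrun, List.take_length]
    have hS : (ρ.map fun x => x.2.1).sum = 0 := by
      have h := hZ
      rw [hzendeq] at h
      exact add_eq_left.mp h
    have hv0 : mend (0 : Fin d → ℕ) ρ = 0 := by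
      funext j
      have h := hexact ρ.length le_rfl j
      rw [zend_def', hZ, mend_def'] at h
      have : ((mend (0 : Fin d → ℕ) ρ j : ℤ)) = 0 := by
        rw [h]; simp [ofNatVec]
      exact_mod_cast this
    have heff : (ρ.map fun x => effSum x.2.1).sum = 0 := by
      rw [effSum_list_sum, hS]
      simp [effSum]
    have hPN : Pval ρ = Nval ρ := by
      have h := PN_sub ρ
      rw [heff] at h
      omega
    refine ⟨ρ.map ackF ++ ackBridge t :: List.replicate (Pval ρ) (ackLoop d Q), ?_, ?_, ?_, ?_⟩
    · -- PathIn
      have hcf' : ChainFrom (Sum.inl s : Q ⊕ Unit)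
          (ρ.map ackF ++ ackBridge t :: List.replicate (Pval ρ) (ackLoop d Q)) := by
        refine chainFrom_append (chainFrom_map hcf) ?_
        rw [endState_map, hEnd]
        exact ⟨rfl, chainFrom_replicate _⟩
      obtain ⟨h1, h2⟩ := (chainFrom_iff _ (Sum.inl s)).mpr hcf'
      refine ⟨h1, ?_⟩
      intro x hx
      rcases List.mem_append.mp hx with hx | hx
      · obtain ⟨y, hy, rfl⟩ := List.mem_map.mp hx
        exact Or.inl ⟨y.1, y.2.1, y.2.2, hmem y hy, rfl⟩
      · rcases List.mem_cons.mp hx with rfl | hx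
        · exact Or.inr (Or.inl rfl)
        · exact Or.inr (Or.inr (List.eq_of_mem_replicate hx))
    · -- FromState
      have hcf' : ChainFrom (Sum.inl s : Q ⊕ Unit)
          (ρ.map ackF ++ ackBridge t :: List.replicate (Pval ρ) (ackLoop d Q)) := by
        refine chainFrom_append (chainFrom_map hcf) ?_
        rw [endState_map, hEnd]
        exact ⟨rfl, chainFrom_replicate _⟩
      exact ((chainFrom_iff _ (Sum.inl s)).mpr hcf').2
    · -- endState
      rw [endState_append, endState_map, hEnd, endState_cons]
      exact endState_replicate _
    · -- mend
      have hb : (ackBridge t : VTrans (d + 2) (Q ⊕ Unit)).2.1 = (0 : Fin (d + 2) → ℤ) := rfl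
      rw [padOneOne_eq, mend_append, mend_mapF, mend_cons, hb, mstep_zero, mend_replicate, hv0]
      have e1 : 1 + Pval ρ - Pval ρ = 1 := by omega
      have e2 : 1 + Nval ρ - Pval ρ = 1 := by omega
      rw [e1, e2]
end

section
/- Let a_1,…,a_n,a∈ℕ and let V be the 2-VASS with states s=q_0,q_1,…,q_{n+1},t and transitions: (q_0,(1,a+1),q_1); for each 1≤i≤n both (q_i,(a_i,−a_i),q_{i+1}) and (q_i,(0,0),q_{i+1}); and (q_{n+1},(−a,0),t). Then t(1,1) is coverable from s(0,0) in V under monus semantics if and only if there exists (x_1,…,x_n)∈{0,1}^n with x_1a_1+⋯+x_na_n=a. -/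
variable {d : ℕ} {Q : Type*}

/-- The 2-VASS for the subset-sum reduction: states `q_0, q_1, …, q_{n+1}`
(encoded as `Sum.inl i` for `i : Fin (n+2)`) and `t` (encoded as `Sum.inr ()`),
with transitions `(q_0, (1, a+1), q_1)`; for each `1 ≤ i ≤ n` both
`(q_i, (a_i, -a_i), q_{i+1})` and `(q_i, (0,0), q_{i+1})`; and
`(q_{n+1}, (-a, 0), t)`. -/
def ssVASS2 (n : ℕ) (as : Fin n → ℕ) (a : ℕ) : VASS 2 (Fin (n + 2) ⊕ Unit) :=
  ⟨{tr | tr = (Sum.inl ⟨0, by omega⟩, ![1, (a : ℤ) + 1], Sum.inl ⟨1, by omega⟩) ∨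
         (∃ i : Fin n, tr = (Sum.inl ⟨(i : ℕ) + 1, by have := i.isLt; omega⟩,
            ![(as i : ℤ), -(as i : ℤ)],
            Sum.inl ⟨(i : ℕ) + 2, by have := i.isLt; omega⟩)) ∨
         (∃ i : Fin n, tr = (Sum.inl ⟨(i : ℕ) + 1, by have := i.isLt; omega⟩,
            ![0, 0],
            Sum.inl ⟨(i : ℕ) + 2, by have := i.isLt; omega⟩)) ∨
         tr = (Sum.inl ⟨n + 1, by omega⟩, ![-(a : ℤ), 0], Sum.inr ())}⟩

namespace SSaux

lemma mend_eq_foldl (v : Fin d → ℕ) (ρ : List (VTrans d Q)) :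
    mend v ρ = ρ.foldl (fun u t => mstep u t.2.1) v := by
  simp [mend, mrun]

lemma mend_cons (v : Fin d → ℕ) (t : VTrans d Q) (ρ : List (VTrans d Q)) :
    mend v (t :: ρ) = mend (mstep v t.2.1) ρ := by
  simp [mend_eq_foldl]

lemma endState_cons (s : Q) (t : VTrans d Q) (ρ : List (VTrans d Q)) :
    endState s (t :: ρ) = endState t.2.2 ρ := by
  simp only [endState, List.map_cons, List.getLastD_cons]

lemma isPath_cons_of_fromState {t0 : VTrans d Q} {ρ : List (VTrans d Q)}
    (h : IsPath ρ) (hf : FromState t0.2.2 ρ) : IsPath (t0 :: ρ) := by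
  cases ρ with
  | nil => exact List.isChain_singleton _
  | cons t1 r => exact List.isChain_cons_cons.mpr ⟨hf.symm, h⟩

lemma fromState_tail {t0 : VTrans d Q} {ρ : List (VTrans d Q)}
    (h : IsPath (t0 :: ρ)) : FromState t0.2.2 ρ := by
  cases ρ with
  | nil => trivial
  | cons t1 r => exact (List.isChain_cons_cons.mp h).1.symm

/-- partial sum of the chosen elements with index `≥ k`. -/
def Ssum (n : ℕ) (as : Fin n → ℕ) (x : Fin n → ℕ) (k : ℕ) : ℕ :=
  ∑ i : Fin n, if k ≤ (i : ℕ) then x i * as i else 0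

lemma Ssum_zero (n : ℕ) (as x : Fin n → ℕ) : Ssum n as x 0 = ∑ i, x i * as i := by
  simp [Ssum]

lemma Ssum_of_ge (n : ℕ) (as x : Fin n → ℕ) {k : ℕ} (h : n ≤ k) : Ssum n as x k = 0 := by
  apply Finset.sum_eq_zero
  intro i _
  rw [if_neg (by have := i.isLt; omega)]

lemma Ssum_succ (n : ℕ) (as x : Fin n → ℕ) {k : ℕ} (h : k < n) :
    Ssum n as x k = x ⟨k, h⟩ * as ⟨k, h⟩ + Ssum n as x (k + 1) := by
  unfold Ssum
  have key : ∀ i : Fin n, (if k ≤ (i : ℕ) then x i * as i else 0)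
      = (if i = ⟨k, h⟩ then x i * as i else 0) + (if k + 1 ≤ (i : ℕ) then x i * as i else 0) := by
    intro i
    by_cases h1 : i = (⟨k, h⟩ : Fin n)
    · subst h1; simp
    · have hc : (i : ℕ) ≠ k := fun hc => h1 (Fin.ext hc)
      by_cases h2 : k + 1 ≤ (i : ℕ)
      · rw [if_pos (by omega), if_neg h1, if_pos h2, zero_add]
      · rw [if_neg (by omega), if_neg h1, if_neg h2]
  rw [Finset.sum_congr rfl (fun i _ => key i), Finset.sum_add_distrib,
    Finset.sum_ite_eq' Finset.univ (⟨k, h⟩ : Fin n), if_pos (Finset.mem_univ _)]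

lemma Ssum_update (n : ℕ) (as x : Fin n → ℕ) {k : ℕ} (h : k < n) (c : ℕ) :
    Ssum n as (Function.update x ⟨k, h⟩ c) (k + 1) = Ssum n as x (k + 1) := by
  unfold Ssum
  apply Finset.sum_congr rfl
  intro i _
  by_cases h2 : k + 1 ≤ (i : ℕ)
  · rw [if_pos h2, if_pos h2, Function.update_of_ne (by
      intro hc
      rw [hc] at h2
      simp at h2)]
  · rw [if_neg h2, if_neg h2]

lemma back (n : ℕ) (as : Fin n → ℕ) (a : ℕ) :
    ∀ (ρ : List (VTrans 2 (Fin (n + 2) ⊕ Unit))) (k : ℕ) (hk : k ≤ n) (v : Fin 2 → ℕ),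
    PathIn (ssVASS2 n as a) ρ →
    FromState (Sum.inl ⟨k + 1, by omega⟩) ρ →
    endState (Sum.inl ⟨k + 1, by omega⟩) ρ = Sum.inr () →
    1 ≤ mend v ρ 0 → 1 ≤ mend v ρ 1 →
    ∃ x : Fin n → ℕ, (∀ i, x i ≤ 1) ∧
      a + 1 ≤ v 0 + Ssum n as x k ∧ Ssum n as x k + 1 ≤ v 1 := by
  intro ρ
  induction ρ with
  | nil =>
    intro k hk v _ _ hend
    simp [endState] at hend
  | cons t0 ρ' ih =>
    intro k hk v hpath hfrom hend h0 h1
    have hmem : t0 ∈ (ssVASS2 n as a).Δ := hpath.2 t0 List.mem_cons_self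
    simp only [ssVASS2, Set.mem_setOf_eq] at hmem
    rcases hmem with h | ⟨i, h⟩ | ⟨i, h⟩ | h
    · -- first transition: impossible, source would be q_0
      rw [h] at hfrom
      simp [FromState, Fin.ext_iff] at hfrom
    · -- middle transition with (a_i, -a_i)
      rw [h] at hfrom
      simp [FromState, Fin.ext_iff] at hfrom
      have hkn : k < n := by have := i.isLt; omega
      have hik : i = (⟨k, hkn⟩ : Fin n) := Fin.ext (show (i:ℕ) = k by omega)
      subst hik
      rw [h] at hend h1 h0 hpath
      rw [endState_cons] at hend
      rw [mend_cons] at h0 h1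
      set v' : Fin 2 → ℕ := mstep v ![(as ⟨k, hkn⟩ : ℤ), -(as ⟨k, hkn⟩ : ℤ)] with hv'
      have hv'0 : v' 0 = v 0 + as ⟨k, hkn⟩ := by
        simp [hv', mstep]
        omega
      have hv'1 : (v' 1 : ℤ) = max ((v 1 : ℤ) - as ⟨k, hkn⟩) 0 := by
        simp [hv', mstep]
        omega
      have hfrom' : FromState (Sum.inl ⟨k + 1 + 1, by omega⟩ : Fin (n + 2) ⊕ Unit) ρ' := by
        have := fromState_tail hpath.1
        simpa using this
      have hend' : endState (Sum.inl ⟨k + 1 + 1, by omega⟩ : Fin (n + 2) ⊕ Unit) ρ' = Sum.inr () := by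
        simpa using hend
      obtain ⟨x', hx', H0, H1⟩ := ih (k + 1) (by omega) v'
        ⟨List.isChain_cons.mp hpath.1 |>.2, fun t ht => hpath.2 t (List.mem_cons_of_mem _ ht)⟩
        hfrom' hend' h0 h1
      refine ⟨Function.update x' ⟨k, hkn⟩ 1, ?_, ?_, ?_⟩
      · intro j
        by_cases hj : j = (⟨k, hkn⟩ : Fin n)
        · subst hj; simp
        · rw [Function.update_of_ne hj]; exact hx' j
      · rw [Ssum_succ n as _ hkn, Ssum_update n as x' hkn 1, Function.update_self]
        omega
      · rw [Ssum_succ n as _ hkn, Ssum_update n as x' hkn 1, Function.update_self]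
        omega
    · -- middle transition with (0, 0)
      rw [h] at hfrom
      simp [FromState, Fin.ext_iff] at hfrom
      have hkn : k < n := by have := i.isLt; omega
      have hik : i = (⟨k, hkn⟩ : Fin n) := Fin.ext (show (i:ℕ) = k by omega)
      subst hik
      rw [h] at hend h1 h0 hpath
      rw [endState_cons] at hend
      rw [mend_cons] at h0 h1
      have hv' : mstep v ![(0 : ℤ), 0] = v := by
        funext j
        fin_cases j <;> simp [mstep]
      rw [hv'] at h0 h1
      have hfrom' : FromState (Sum.inl ⟨k + 1 + 1, by omega⟩ : Fin (n + 2) ⊕ Unit) ρ' := by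
        have := fromState_tail hpath.1
        simpa using this
      have hend' : endState (Sum.inl ⟨k + 1 + 1, by omega⟩ : Fin (n + 2) ⊕ Unit) ρ' = Sum.inr () := by
        simpa using hend
      obtain ⟨x', hx', H0, H1⟩ := ih (k + 1) (by omega) v
        ⟨List.isChain_cons.mp hpath.1 |>.2, fun t ht => hpath.2 t (List.mem_cons_of_mem _ ht)⟩
        hfrom' hend' h0 h1
      refine ⟨Function.update x' ⟨k, hkn⟩ 0, ?_, ?_, ?_⟩
      · intro j
        by_cases hj : j = (⟨k, hkn⟩ : Fin n)
        · subst hj; simp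
        · rw [Function.update_of_ne hj]; exact hx' j
      · rw [Ssum_succ n as _ hkn, Ssum_update n as x' hkn 0, Function.update_self]
        omega
      · rw [Ssum_succ n as _ hkn, Ssum_update n as x' hkn 0, Function.update_self]
        omega
    · -- last transition: k = n
      rw [h] at hfrom
      simp [FromState, Fin.ext_iff] at hfrom
      have hkn : n = k := by omega
      subst hkn
      rw [h] at hend h1 h0 hpath
      rw [endState_cons] at hend
      rw [mend_cons] at h0 h1
      -- ρ' must be empty
      have hρ' : ρ' = [] := by
        cases ρ' with
        | nil => rfl
        | cons t1 r =>
          have h1' : t1.1 = (Sum.inr () : Fin (n + 2) ⊕ Unit) := by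
            have := fromState_tail hpath.1
            simpa [FromState] using this
          have hmem1 : t1 ∈ (ssVASS2 n as a).Δ :=
            hpath.2 t1 (List.mem_cons_of_mem _ List.mem_cons_self)
          simp only [ssVASS2, Set.mem_setOf_eq] at hmem1
          rcases hmem1 with h | ⟨i, h⟩ | ⟨i, h⟩ | h <;> rw [h] at h1' <;> simp at h1'
      subst hρ'
      refine ⟨fun _ => 0, fun _ => Nat.zero_le 1, ?_, ?_⟩
      · rw [Ssum_of_ge n as _ (le_refl n)]
        simp [mend, mrun, mstep] at h0
        omega
      · rw [Ssum_of_ge n as _ (le_refl n)]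
        simp [mend, mrun, mstep] at h1
        omega

lemma fwd (n : ℕ) (as : Fin n → ℕ) (a : ℕ) :
    ∀ (m k : ℕ) (_hmk : k + m = n) (x : Fin n → ℕ) (v : Fin 2 → ℕ),
    (∀ i, x i ≤ 1) →
    a + 1 ≤ v 0 + Ssum n as x k → Ssum n as x k + 1 ≤ v 1 →
    ∃ ρ, PathIn (ssVASS2 n as a) ρ ∧ FromState (Sum.inl ⟨k + 1, by omega⟩) ρ ∧
      endState (Sum.inl ⟨k + 1, by omega⟩ : Fin (n + 2) ⊕ Unit) ρ = Sum.inr () ∧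
      1 ≤ mend v ρ 0 ∧ 1 ≤ mend v ρ 1 := by
  intro m
  induction m with
  | zero =>
    intro k hk x v hx h0 h1
    have hkn : n = k := by omega
    subst hkn
    rw [Ssum_of_ge n as _ (le_refl n)] at h0 h1
    refine ⟨[(Sum.inl ⟨n + 1, by omega⟩, ![-(a : ℤ), 0], Sum.inr ())], ⟨?_, ?_⟩, rfl, rfl, ?_, ?_⟩
    · exact List.isChain_singleton _
    · intro t ht
      simp at ht
      subst ht
      simp only [ssVASS2, Set.mem_setOf_eq]
      right; right; right; trivial
    · simp [mend, mrun, mstep]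
      omega
    · simp [mend, mrun, mstep]
      omega
  | succ m ih =>
    intro k hk x v hx h0 h1
    have hkn : k < n := by omega
    have hxk : x ⟨k, hkn⟩ = 0 ∨ x ⟨k, hkn⟩ = 1 := by have := hx ⟨k, hkn⟩; omega
    rw [Ssum_succ n as x hkn] at h0 h1
    rcases hxk with hxk | hxk
    · -- take the (0,0) transition
      rw [hxk, zero_mul, zero_add] at h0 h1
      obtain ⟨ρ', hpath', hfrom', hend', H0, H1⟩ := ih (k + 1) (by omega) x v hx h0 h1
      refine ⟨(Sum.inl ⟨k + 1, by omega⟩, ![(0 : ℤ), 0], Sum.inl ⟨k + 2, by omega⟩) :: ρ',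
        ⟨isPath_cons_of_fromState hpath'.1 (by simpa using hfrom'), ?_⟩, rfl, ?_, ?_, ?_⟩
      · intro t ht
        rcases List.mem_cons.mp ht with h | h
        · subst h
          simp only [ssVASS2, Set.mem_setOf_eq]
          right; right; left
          exact ⟨⟨k, hkn⟩, rfl⟩
        · exact hpath'.2 t h
      · rw [endState_cons]
        simpa using hend'
      · rw [mend_cons]
        have hv' : mstep v ![(0 : ℤ), 0] = v := by
          funext j
          fin_cases j <;> simp [mstep]
        rw [hv']
        exact H0
      · rw [mend_cons]
        have hv' : mstep v ![(0 : ℤ), 0] = v := by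
          funext j
          fin_cases j <;> simp [mstep]
        rw [hv']
        exact H1
    · -- take the (a_k, -a_k) transition
      rw [hxk, one_mul] at h0 h1
      set v' : Fin 2 → ℕ := mstep v ![(as ⟨k, hkn⟩ : ℤ), -(as ⟨k, hkn⟩ : ℤ)] with hv'
      have hv'0 : v' 0 = v 0 + as ⟨k, hkn⟩ := by
        simp [hv', mstep]
        omega
      have hv'1 : v' 1 = v 1 - as ⟨k, hkn⟩ := by
        simp [hv', mstep]
        omega
      obtain ⟨ρ', hpath', hfrom', hend', H0, H1⟩ := ih (k + 1) (by omega) x v' hx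
        (by omega) (by omega)
      refine ⟨(Sum.inl ⟨k + 1, by omega⟩, ![(as ⟨k, hkn⟩ : ℤ), -(as ⟨k, hkn⟩ : ℤ)],
          Sum.inl ⟨k + 2, by omega⟩) :: ρ',
        ⟨isPath_cons_of_fromState hpath'.1 (by simpa using hfrom'), ?_⟩, rfl, ?_, ?_, ?_⟩
      · intro t ht
        rcases List.mem_cons.mp ht with h | h
        · subst h
          simp only [ssVASS2, Set.mem_setOf_eq]
          right; left
          exact ⟨⟨k, hkn⟩, rfl⟩
        · exact hpath'.2 t h
      · rw [endState_cons]
        simpa using hend'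
      · rw [mend_cons, ← hv']
        exact H0
      · rw [mend_cons, ← hv']
        exact H1

end SSaux

/-- In the 2-VASS above, `t(1,1)` is coverable from `s(0,0)` under
monus semantics iff there is `(x_1,…,x_n) ∈ {0,1}^n` with `x_1a_1 + ⋯ + x_na_n = a`. -/
theorem stmt16 (n : ℕ) (as : Fin n → ℕ) (a : ℕ) :
    MonusCover (ssVASS2 n as a) (Sum.inl ⟨0, by omega⟩) ![0, 0] (Sum.inr ()) ![1, 1] ↔
    ∃ x : Fin n → ℕ, (∀ i, x i ≤ 1) ∧ ∑ i, x i * as i = a := by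
  open SSaux in
  constructor
  · rintro ⟨w', hw, ρ, hpath, hfrom, hend, hmend⟩
    cases ρ with
    | nil => simp [endState] at hend
    | cons t0 ρ' =>
      have hmem : t0 ∈ (ssVASS2 n as a).Δ := hpath.2 t0 List.mem_cons_self
      simp only [ssVASS2, Set.mem_setOf_eq] at hmem
      have hfrom0 : t0.1 = (Sum.inl ⟨0, by omega⟩ : Fin (n + 2) ⊕ Unit) := hfrom
      rcases hmem with h | ⟨i, h⟩ | ⟨i, h⟩ | h
      · rw [h] at hend hmend hpath
        rw [SSaux.endState_cons] at hend
        rw [SSaux.mend_cons] at hmend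
        have hv : mstep ![0, 0] ![(1 : ℤ), (a : ℤ) + 1] = ![1, a + 1] := by
          funext j
          fin_cases j <;> simp [mstep]
        rw [hv] at hmend
        have h0 : 1 ≤ mend ![1, a + 1] ρ' 0 := by
          rw [hmend]; simpa using hw 0
        have h1 : 1 ≤ mend ![1, a + 1] ρ' 1 := by
          rw [hmend]; simpa using hw 1
        have hfrom' : FromState (Sum.inl ⟨0 + 1, by omega⟩ : Fin (n + 2) ⊕ Unit) ρ' := by
          have := SSaux.fromState_tail hpath.1
          simpa using this
        have hend' : endState (Sum.inl ⟨0 + 1, by omega⟩ : Fin (n + 2) ⊕ Unit) ρ' = Sum.inr () := by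
          simpa using hend
        obtain ⟨x, hx, H0, H1⟩ := SSaux.back n as a ρ' 0 (Nat.zero_le n) ![1, a + 1]
          ⟨List.isChain_cons.mp hpath.1 |>.2, fun t ht => hpath.2 t (List.mem_cons_of_mem _ ht)⟩
          hfrom' hend' h0 h1
        refine ⟨x, hx, ?_⟩
        rw [← SSaux.Ssum_zero n as x]
        simp [Matrix.cons_val_zero, Matrix.cons_val_one] at H0 H1
        omega
      · rw [h] at hfrom0; simp [Fin.ext_iff] at hfrom0
      · rw [h] at hfrom0; simp [Fin.ext_iff] at hfrom0
      · rw [h] at hfrom0; simp [Fin.ext_iff] at hfrom0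
  · rintro ⟨x, hx, hsum⟩
    have hS : SSaux.Ssum n as x 0 = a := by rw [SSaux.Ssum_zero]; exact hsum
    obtain ⟨ρ', hpath', hfrom', hend', H0, H1⟩ := SSaux.fwd n as a n 0 (by omega) x
      ![1, a + 1] hx (by simp [hS]) (by simp [hS])
    set t0 : VTrans 2 (Fin (n + 2) ⊕ Unit) :=
      (Sum.inl ⟨0, by omega⟩, ![(1 : ℤ), (a : ℤ) + 1], Sum.inl ⟨1, by omega⟩) with ht0
    refine ⟨mend ![0, 0] (t0 :: ρ'), ?_, t0 :: ρ', ⟨?_, ?_⟩, rfl, ?_, rfl⟩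
    · have hv : mstep ![0, 0] ![(1 : ℤ), (a : ℤ) + 1] = ![1, a + 1] := by
        funext j
        fin_cases j <;> simp [mstep]
      intro j
      rw [SSaux.mend_cons]
      have : t0.2.1 = ![(1 : ℤ), (a : ℤ) + 1] := rfl
      rw [this, hv]
      fin_cases j
      · simpa using H0
      · simpa using H1
    · exact SSaux.isPath_cons_of_fromState hpath'.1 (by simpa [ht0] using hfrom')
    · intro t ht
      rcases List.mem_cons.mp ht with h | h
      · subst h
        exact Or.inl ht0
      · exact hpath'.2 t h
    · rw [SSaux.endState_cons]
      simpa [ht0] using hend'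
end
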